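/- arXiv:1111.4004 — 4 statements merged into one kernel-verified Lean document; each statement's English description precedes it below -/
import Mathlib

section
/- Let F be a field, n(y), d(y) ∈ F[y] nonzero coprime polynomials with N = deg n, D = deg d. Let p ∈ F[x] be nonzero of grade g and q(y) = Σ_i p_i n(y)^i d(y)^{g-i}. If N ≠ D then deg q = g·D + max{ i·(N−D) : p_i ≠ 0 }. -/
open Polynomial Finset

theorem stmt_1 {F : Type*} [Field F] (n d : F[X]) (hn : n ≠ 0) (hd : d ≠ 0)
    (hcop : IsCoprime n d) (N D : ℕ) (hN : N = n.natDegree) (hD : D = d.natDegree)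
    (hND : N ≠ D) (p : F[X]) (hp : p ≠ 0) (g : ℕ) (hg : p.natDegree ≤ g)
    (q : F[X]) (hq : q = ∑ i ∈ range (g + 1), C (p.coeff i) * n ^ i * d ^ (g - i))
    (hs : p.support.Nonempty) :
    (q.natDegree : ℤ) = (g : ℤ) * D + p.support.sup' hs (fun i => (i : ℤ) * ((N : ℤ) - D)) := by
  set f : ℕ → F[X] := fun i => C (p.coeff i) * n ^ i * d ^ (g - i) with hf
  have hsub : p.support ⊆ range (g + 1) := by
    intro i hi
    simp only [mem_range]
    exact Nat.lt_succ_of_le (le_trans (le_natDegree_of_mem_supp i hi) hg)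
  have hq' : q = ∑ i ∈ p.support, f i := by
    rw [hq, ← Finset.sum_subset hsub]
    intro i _ hi
    simp [hf, notMem_support_iff.mp hi]
  have hfne : ∀ i ∈ p.support, f i ≠ 0 := by
    intro i hi
    simp only [hf]
    exact mul_ne_zero (mul_ne_zero (C_ne_zero.mpr (mem_support_iff.mp hi))
      (pow_ne_zero _ hn)) (pow_ne_zero _ hd)
  have hdeg : ∀ i ∈ p.support, (f i).natDegree = i * N + (g - i) * D := by
    intro i hi
    rw [hf]
    simp only
    rw [natDegree_mul (mul_ne_zero (C_ne_zero.mpr (mem_support_iff.mp hi))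
      (pow_ne_zero _ hn)) (pow_ne_zero _ hd),
      natDegree_mul (C_ne_zero.mpr (mem_support_iff.mp hi)) (pow_ne_zero _ hn),
      natDegree_C, natDegree_pow, natDegree_pow, hN, hD]
    ring
  have hcast : ∀ i ∈ p.support, ((f i).natDegree : ℤ) = g * D + i * ((N : ℤ) - D) := by
    intro i hi
    have hig : i ≤ g := le_trans (le_natDegree_of_mem_supp i hi) hg
    rw [hdeg i hi]
    push_cast [hig]
    ring
  have hND' : (N : ℤ) - D ≠ 0 := by
    intro h
    exact hND (by omega)
  have hdisj : Set.Pairwise { i | i ∈ p.support ∧ f i ≠ 0 }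
      (Function.onFun Ne (Polynomial.natDegree ∘ f)) := by
    intro i hi j hj hij
    simp only [Function.onFun, Function.comp_apply]
    intro h
    apply hij
    have h' : (g : ℤ) * D + i * ((N : ℤ) - D) = g * D + j * ((N : ℤ) - D) := by
      rw [← hcast i hi.1, ← hcast j hj.1, h]
    have : (i : ℤ) * ((N : ℤ) - D) = j * ((N : ℤ) - D) := by linarith
    have := mul_right_cancel₀ hND' this
    exact_mod_cast this
  have hsum : q.natDegree = p.support.sup fun i => (f i).natDegree := by
    rw [hq']
    exact natDegree_sum_eq_of_disjoint f p.support hdisj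
  rw [hsum, ← Finset.sup'_eq_sup hs]
  have hmono : ∀ (x y : ℕ), ((max x y : ℕ) : ℤ) = max (x : ℤ) (y : ℤ) := by
    intro x y; exact_mod_cast Nat.cast_max x y
  rw [Finset.comp_sup'_eq_sup'_comp hs (fun m : ℕ => (m : ℤ)) hmono]
  rw [Finset.sup'_congr hs rfl (fun i hi => show ((fun m : ℕ => (m:ℤ)) ∘ fun i => (f i).natDegree) i = (g:ℤ) * D + i * ((N:ℤ) - D) from hcast i hi)]
  rw [show (fun i : ℕ => (g:ℤ) * D + i * ((N:ℤ) - D)) = (fun z : ℤ => (g:ℤ) * D + z) ∘ (fun i : ℕ => (i:ℤ) * ((N:ℤ) - D)) from rfl,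
    ← Finset.comp_sup'_eq_sup'_comp hs (fun z : ℤ => (g:ℤ) * D + z) (fun x y => by rw [max_add_add_left])]
end

section
/- Let F be a field, n(y), d(y) ∈ F[y] nonzero coprime with G = max(deg n, deg d) = N = deg n > deg d = D. Let p ∈ F[x] be nonzero of grade g and q(y) = Σ_i p_i n(y)^i d(y)^{g-i}. Then deg q = g·G if and only if g = deg p. -/
open Polynomial Finset

lemma aux_lt_stmt2 {N D : ℕ} (hND : D < N) {i k g : ℕ} (hik : i < k) (hkg : k ≤ g) :
    i * N + (g - i) * D < k * N + (g - k) * D := by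
  have h1 : g - i = (g - k) + (k - i) := by omega
  have h2 : (k - i) * D < (k - i) * N :=
    mul_lt_mul_of_pos_left hND (by omega : 0 < k - i)
  have h3 : i * N + (k - i) * N = k * N := by rw [← add_mul]; congr 1; omega
  rw [h1, add_mul]
  linarith

theorem stmt_2 {F : Type*} [Field F] (n d : F[X]) (hn : n ≠ 0) (hd : d ≠ 0)
    (hcop : IsCoprime n d) (N D G : ℕ) (hN : N = n.natDegree) (hD : D = d.natDegree)
    (hND : D < N) (hG : G = N) (p : F[X]) (hp : p ≠ 0) (g : ℕ) (hg : p.natDegree ≤ g)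
    (q : F[X]) (hq : q = ∑ i ∈ range (g + 1), C (p.coeff i) * n ^ i * d ^ (g - i)) :
    q.natDegree = g * G ↔ g = p.natDegree := by
  subst hG
  set k := p.natDegree with hk
  set t : ℕ → F[X] := fun i => C (p.coeff i) * n ^ i * d ^ (g - i) with ht
  have hterm : ∀ i, p.coeff i ≠ 0 → t i ≠ 0 ∧ (t i).natDegree = i * G + (g - i) * D := by
    intro i hi
    have hC : (C (p.coeff i) : F[X]) ≠ 0 := C_ne_zero.mpr hi
    have hn' : n ^ i ≠ 0 := pow_ne_zero _ hn
    have hd' : d ^ (g - i) ≠ 0 := pow_ne_zero _ hd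
    refine ⟨mul_ne_zero (mul_ne_zero hC hn') hd', ?_⟩
    rw [natDegree_mul (mul_ne_zero hC hn') hd', natDegree_mul hC hn',
      natDegree_C, natDegree_pow, natDegree_pow, ← hN, ← hD]
    ring
  have hck : p.coeff k ≠ 0 := leadingCoeff_ne_zero.mpr hp
  have hkmem : k ∈ range (g + 1) := mem_range.mpr (by omega)
  have hqdeg : q.natDegree = k * G + (g - k) * D := by
    rw [hq, ← Finset.add_sum_erase _ t hkmem]
    have hlt : (∑ i ∈ (range (g + 1)).erase k, t i).degree < (t k).degree := by
      have hbot : (⊥ : WithBot ℕ) < (t k).degree := by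
        rw [bot_lt_iff_ne_bot, Ne, degree_eq_bot]
        exact (hterm k hck).1
      refine lt_of_le_of_lt (degree_sum_le _ _) ?_
      rw [Finset.sup_lt_iff hbot]
      intro i hi
      by_cases hci : p.coeff i = 0
      · have : t i = 0 := by simp [ht, hci]
        rw [this, degree_zero]; exact hbot
      · have hik : i < k :=
          lt_of_le_of_ne (le_natDegree_of_ne_zero hci) (Finset.ne_of_mem_erase hi)
        rw [degree_eq_natDegree (hterm i hci).1, degree_eq_natDegree (hterm k hck).1,
          (hterm i hci).2, (hterm k hck).2, Nat.cast_lt]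
        exact aux_lt_stmt2 hND hik hg
    rw [natDegree_eq_of_degree_eq (degree_add_eq_left_of_degree_lt hlt), (hterm k hck).2]
  rw [hqdeg]
  constructor
  · intro h
    by_contra hne
    have hkg : k < g := lt_of_le_of_ne hg (Ne.symm hne)
    have h2 := aux_lt_stmt2 hND hkg (le_refl g)
    simp at h2
    omega
  · intro h
    subst h
    simp
end

section
/- Let F be a field, n(y), d(y) ∈ F[y] nonzero coprime with deg n = deg d = G and leading coefficients n_G, d_G. Let p ∈ F[x] be nonzero of grade g and q(y) = Σ_i p_i n(y)^i d(y)^{g-i}. Then deg q < g·G if and only if p(n_G / d_G) = 0, i.e. (x − n_G d_G^{-1}) divides p(x). -/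
open Polynomial Finset

theorem stmt_3 {F : Type*} [Field F] (n d : F[X]) (hn : n ≠ 0) (hd : d ≠ 0)
    (hcop : IsCoprime n d) (G : ℕ) (hNn : n.natDegree = G) (hDd : d.natDegree = G)
    (hG1 : 1 ≤ G) (p : F[X]) (hp : p ≠ 0) (g : ℕ) (hg : p.natDegree ≤ g)
    (q : F[X]) (hq : q = ∑ i ∈ range (g + 1), C (p.coeff i) * n ^ i * d ^ (g - i)) :
    q.natDegree < g * G ↔ p.eval (n.leadingCoeff / d.leadingCoeff) = 0 := by
  have hdG : d.leadingCoeff ≠ 0 := leadingCoeff_ne_zero.mpr hd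
  have hcoeff : q.coeff (g * G) =
      d.leadingCoeff ^ g * p.eval (n.leadingCoeff / d.leadingCoeff) := by
    rw [hq, finset_sum_coeff,
      eval_eq_sum_range' (lt_of_le_of_lt hg (Nat.lt_succ_self g)), Finset.mul_sum]
    apply Finset.sum_congr rfl
    intro i hi
    have hi' : i ≤ g := Nat.lt_succ_iff.mp (mem_range.mp hi)
    have h1 : (n ^ i).natDegree = i * G := by simp [natDegree_pow, hNn]
    have h2 : (d ^ (g - i)).natDegree = (g - i) * G := by simp [natDegree_pow, hDd]
    have h3 : i * G + (g - i) * G = g * G := by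
      rw [← add_mul, Nat.add_sub_cancel' hi']
    rw [mul_assoc, coeff_C_mul,
      show g * G = (n ^ i).natDegree + (d ^ (g - i)).natDegree from by rw [h1, h2, h3],
      coeff_mul_degree_add_degree, leadingCoeff_pow, leadingCoeff_pow, div_pow,
      show d.leadingCoeff ^ g = d.leadingCoeff ^ (g - i) * d.leadingCoeff ^ i from
        (pow_sub_mul_pow _ hi').symm]
    field_simp
  have hdeg : q.natDegree ≤ g * G := by
    rw [hq]
    apply natDegree_sum_le_of_forall_le
    intro i hi
    have hi' : i ≤ g := Nat.lt_succ_iff.mp (mem_range.mp hi)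
    calc (C (p.coeff i) * n ^ i * d ^ (g - i)).natDegree
        ≤ (C (p.coeff i) * n ^ i).natDegree + (d ^ (g - i)).natDegree := natDegree_mul_le
      _ ≤ (C (p.coeff i)).natDegree + (n ^ i).natDegree + (d ^ (g - i)).natDegree := by
          exact Nat.add_le_add_right natDegree_mul_le _
      _ ≤ 0 + i * G + (g - i) * G := by
          simp [natDegree_pow, hNn, hDd]
      _ = g * G := by rw [zero_add, ← add_mul, Nat.add_sub_cancel' hi']
  constructor
  · intro h
    have hc := coeff_eq_zero_of_natDegree_lt h
    rw [hcoeff] at hc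
    rcases mul_eq_zero.mp hc with h1 | h2
    · exact absurd h1 (pow_ne_zero _ hdG)
    · exact h2
  · intro h
    have hc : q.coeff (g * G) = 0 := by rw [hcoeff, h, mul_zero]
    rcases lt_or_eq_of_le hdeg with h' | h'
    · exact h'
    · exfalso
      have hq0 : q = 0 := leadingCoeff_eq_zero.mp (by rw [leadingCoeff, h']; exact hc)
      have hg0 : g = 0 := by
        rw [hq0, natDegree_zero] at h'
        rcases Nat.mul_eq_zero.mp h'.symm with h'' | h''
        · exact h''
        · omega
      subst hg0
      have hp0 : p.coeff 0 ≠ 0 := by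
        have hd0 : p.natDegree = 0 := Nat.le_zero.mp hg
        rw [← hd0]
        exact mt leadingCoeff_eq_zero.mp hp
      rw [hq0] at hq
      simp at hq
      exact hp0 (C_eq_zero.mp hq.symm)
end

section
/- Let F be a field, n(y), d(y) ∈ F[y] nonzero coprime, g ∈ ℕ. The map Φ_g sending a polynomial p ∈ F[x] of degree ≤ g to Σ_{i=0}^{g} p_i n(y)^i d(y)^{g-i} ∈ F[y] is injective. -/
open Polynomial Finset

private lemma key_aux {F : Type*} [Field F] (n d : F[X]) (hn : n ≠ 0)
    (hd : 1 ≤ d.natDegree) (hcop : IsCoprime n d) :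
    ∀ G (q : ℕ → F), (∑ i ∈ range (G + 1), C (q i) * n ^ i * d ^ (G - i) = 0) →
      ∀ i ≤ G, q i = 0 := by
  intro G
  induction G with
  | zero =>
    intro q hsum i hi
    interval_cases i
    simpa using hsum
  | succ G ih =>
    intro q hsum i hi
    have hd0 : d ≠ 0 := fun h => by simp [h] at hd
    -- split off last term
    rw [Finset.sum_range_succ] at hsum
    have hdvd : d ∣ C (q (G + 1)) * n ^ (G + 1) := by
      have : d ∣ ∑ i ∈ range (G + 1), C (q i) * n ^ i * d ^ (G + 1 - i) := by
        apply Finset.dvd_sum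
        intro j hj
        have hj' : j ≤ G := Nat.lt_succ_iff.mp (Finset.mem_range.mp hj)
        have : G + 1 - j = (G - j) + 1 := by omega
        rw [this, pow_succ]
        exact ⟨C (q j) * n ^ j * d ^ (G - j), by ring⟩
      simp only [Nat.sub_self, pow_zero, mul_one] at hsum
      have h2 := eq_neg_of_add_eq_zero_right hsum
      rw [h2]
      exact dvd_neg.mpr this
    have hcop' : IsCoprime d (n ^ (G + 1)) := hcop.symm.pow_right
    have hdvdC : d ∣ C (q (G + 1)) := hcop'.dvd_of_dvd_mul_right hdvd
    have htop : q (G + 1) = 0 := by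
      by_contra h
      have := Polynomial.natDegree_le_of_dvd hdvdC (by simpa using h)
      simp [Polynomial.natDegree_C] at this
      omega
    have hrest : ∑ i ∈ range (G + 1), C (q i) * n ^ i * d ^ (G - i) = 0 := by
      have hsum' : d * ∑ i ∈ range (G + 1), C (q i) * n ^ i * d ^ (G - i) = 0 := by
        rw [Finset.mul_sum]
        rw [htop] at hsum
        simp only [map_zero, zero_mul] at hsum
        rw [← hsum, add_zero]
        apply Finset.sum_congr rfl
        intro j hj
        have hj' : j ≤ G := Nat.lt_succ_iff.mp (Finset.mem_range.mp hj)
        have : G + 1 - j = (G - j) + 1 := by omega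
        rw [this, pow_succ]
        ring
      rcases mul_eq_zero.mp hsum' with h | h
      · exact absurd h hd0
      · exact h
    rcases Nat.lt_succ_iff_lt_or_eq.mp (Nat.lt_succ_of_le hi) with h | h
    · exact ih q hrest i (Nat.lt_succ_iff.mp h)
    · rw [h]; exact htop

theorem stmt_5 {F : Type*} [Field F] (n d : F[X]) (hn : n ≠ 0) (hd : d ≠ 0)
    (hcop : IsCoprime n d) (hG1 : 1 ≤ max n.natDegree d.natDegree) (g : ℕ)
    (p₁ p₂ : F[X]) (h₁ : p₁.natDegree ≤ g) (h₂ : p₂.natDegree ≤ g)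
    (heq : ∑ i ∈ range (g + 1), C (p₁.coeff i) * n ^ i * d ^ (g - i)
         = ∑ i ∈ range (g + 1), C (p₂.coeff i) * n ^ i * d ^ (g - i)) :
    p₁ = p₂ := by
  set q : ℕ → F := fun i => p₁.coeff i - p₂.coeff i with hq
  have hsum : ∑ i ∈ range (g + 1), C (q i) * n ^ i * d ^ (g - i) = 0 := by
    have := sub_eq_zero_of_eq heq
    rw [← Finset.sum_sub_distrib] at this
    rw [← this]
    apply Finset.sum_congr rfl
    intro j _
    simp [hq, map_sub]
    ring
  have hzero : ∀ i ≤ g, q i = 0 := by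
    rcases le_max_iff.mp hG1 with hn1 | hd1
    · -- n nonconstant: swap roles via reflection
      intro i hi
      have hrefl : ∑ j ∈ range (g + 1), C (q (g - j)) * d ^ j * n ^ (g - j) = 0 := by
        rw [← hsum]
        rw [← Finset.sum_range_reflect (fun j => C (q (g - j)) * d ^ j * n ^ (g - j)) (g + 1)]
        apply Finset.sum_congr rfl
        intro j hj
        have hj' : j ≤ g := Nat.lt_succ_iff.mp (Finset.mem_range.mp hj)
        have e1 : g + 1 - 1 - j = g - j := by omega
        have e2 : g - (g - j) = j := by omega
        rw [e1, e2]
        ring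
      have := key_aux d n hd hn1 hcop.symm g (fun j => q (g - j)) hrefl (g - i) (by omega)
      simpa [Nat.sub_sub_self hi] using this
    · exact key_aux n d hn hd1 hcop g q hsum
  ext i
  rcases le_or_gt i g with h | h
  · exact sub_eq_zero.mp (hzero i h)
  · rw [Polynomial.coeff_eq_zero_of_natDegree_lt (lt_of_le_of_lt h₁ h),
        Polynomial.coeff_eq_zero_of_natDegree_lt (lt_of_le_of_lt h₂ h)]
end
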